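/- Khintchine inequality for p = 1: for every positive integer n and all complex numbers α_1, …, α_n, (1/√2)·(∑_{i=1}^n |α_i|²)^{1/2} ≤ (1/2^n) ∑_{w ∈ {−1,1}^n} |∑_{i=1}^n α_i w_i| ≤ (∑_{i=1}^n |α_i|²)^{1/2}. -/

import Mathlib

open Finset

namespace KhintchineAux

/-! ### Generalities about the discrete cube `Fin n → ℤˣ` -/

lemma zunits_univ : (Finset.univ : Finset ℤˣ) = {1, -1} := by
  ext u
  rcases Int.units_eq_one_or u with h | h <;> simp [h]

lemma sum_zunits {M : Type*} [AddCommMonoid M] (F : ℤˣ → M) :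
    ∑ u : ℤˣ, F u = F 1 + F (-1) := by
  rw [zunits_univ, Finset.sum_insert (by decide), Finset.sum_singleton]

lemma prodsum {n : ℕ} {β : Type*} [CommSemiring β] (g : Fin n → ℤˣ → β) :
    ∑ x : Fin n → ℤˣ, ∏ i, g i (x i) = ∏ i, ∑ u : ℤˣ, g i u := by
  rw [Finset.prod_univ_sum]
  rw [Fintype.piFinset_univ]

/-- coordinate value as a real number -/
noncomputable def uv (v : ℤˣ) : ℝ := ((v : ℤ) : ℝ)

lemma uv_mul (v w : ℤˣ) : uv (v * w) = uv v * uv w := by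
  simp [uv]

lemma uv_one : uv 1 = 1 := by simp [uv]

lemma uv_neg_one : uv (-1) = -1 := by simp [uv]

lemma uv_sq (v : ℤˣ) : uv v * uv v = 1 := by
  rw [← uv_mul, Int.units_mul_self, uv_one]

lemma cube_mul_self {n : ℕ} (x : Fin n → ℤˣ) : x * x = 1 :=
  funext fun i => Int.units_mul_self (x i)

lemma sum_cube_reindex {n : ℕ} {M : Type*} [AddCommMonoid M]
    (δ : Fin n → ℤˣ) (F : (Fin n → ℤˣ) → M) :
    ∑ x : Fin n → ℤˣ, F (x * δ) = ∑ x : Fin n → ℤˣ, F x :=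
  Fintype.sum_equiv (Equiv.mulRight δ) _ _ (fun _ => rfl)

lemma card_cube (n : ℕ) : (Fintype.card (Fin n → ℤˣ) : ℝ) = 2 ^ n := by
  have h2 : Fintype.card ℤˣ = 2 := by
    rw [← Finset.card_univ, zunits_univ]
    decide
  rw [Fintype.card_fun, h2, Fintype.card_fin]
  push_cast
  rfl

/-- orthogonality of coordinates -/
lemma sum_uv_mul {n : ℕ} (i j : Fin n) :
    ∑ x : Fin n → ℤˣ, uv (x i) * uv (x j) = if i = j then (2:ℝ) ^ n else 0 := by
  rcases eq_or_ne i j with h | h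
  · subst h
    rw [if_pos rfl]
    have : ∀ x : Fin n → ℤˣ, uv (x i) * uv (x i) = 1 := fun x => uv_sq (x i)
    rw [Finset.sum_congr rfl (fun x _ => this x), Finset.sum_const, Finset.card_univ,
      nsmul_eq_mul, mul_one, ← card_cube n]
  · simp only [if_neg h]
    set d : Fin n → ℤˣ := fun k => if k = i then (-1 : ℤˣ) else 1 with hd
    have key : ∀ x : Fin n → ℤˣ, uv ((x * d) i) * uv ((x * d) j) = -(uv (x i) * uv (x j)) := by
      intro x
      have hdi : d i = -1 := by simp [hd]
      have hdj : d j = 1 := by simp [hd, (Ne.symm h)]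
      simp only [Pi.mul_apply, uv_mul, hdi, hdj, uv_neg_one, uv_one]
      ring
    have h1 : ∑ x : Fin n → ℤˣ, uv (x i) * uv (x j)
        = ∑ x : Fin n → ℤˣ, -(uv (x i) * uv (x j)) := by
      conv_lhs => rw [← sum_cube_reindex d (fun x => uv (x i) * uv (x j))]
      exact Finset.sum_congr rfl (fun x _ => key x)
    rw [Finset.sum_neg_distrib] at h1
    linarith


/-! ### Walsh characters -/

noncomputable def chi {n : ℕ} (A : Finset (Fin n)) (x : Fin n → ℤˣ) : ℝ :=
  ∏ i ∈ A, uv (x i)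

lemma chi_mul {n : ℕ} (A : Finset (Fin n)) (x y : Fin n → ℤˣ) :
    chi A (x * y) = chi A x * chi A y := by
  rw [chi, chi, chi, ← Finset.prod_mul_distrib]
  exact Finset.prod_congr rfl (fun i _ => uv_mul (x i) (y i))

lemma chi_one {n : ℕ} (A : Finset (Fin n)) : chi A (1 : Fin n → ℤˣ) = 1 := by
  rw [chi]
  exact Finset.prod_eq_one (fun i _ => uv_one)

lemma chi_empty {n : ℕ} (x : Fin n → ℤˣ) : chi (∅ : Finset (Fin n)) x = 1 := by
  simp [chi]

lemma sum_chi_over_sets {n : ℕ} (z : Fin n → ℤˣ) :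
    ∑ A : Finset (Fin n), chi A z = if z = 1 then (2:ℝ) ^ n else 0 := by
  have key : ∏ i : Fin n, (uv (z i) + 1) = ∑ A : Finset (Fin n), chi A z := by
    rw [Finset.prod_add]
    rw [Finset.powerset_univ]
    exact Finset.sum_congr rfl (fun A _ => by rw [Finset.prod_const_one, mul_one]; rfl)
  rw [← key]
  rcases eq_or_ne z 1 with h | h
  · subst h
    rw [if_pos rfl]
    have : ∀ i : Fin n, uv ((1 : Fin n → ℤˣ) i) + 1 = 2 := fun i => by
      simp [uv_one, Pi.one_apply]
      norm_num
    rw [Finset.prod_congr rfl (fun i _ => this i), Finset.prod_const, Finset.card_univ,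
      Fintype.card_fin]
  · rw [if_neg h]
    have : ∃ i, z i ≠ 1 := by
      by_contra hc
      push_neg at hc
      exact h (funext hc)
    obtain ⟨i, hi⟩ := this
    have hzi : z i = -1 := (Int.units_eq_one_or (z i)).resolve_left hi
    apply Finset.prod_eq_zero (Finset.mem_univ i)
    rw [hzi, uv_neg_one]
    norm_num

/-! ### The function `f = |S|` and its Walsh coefficients -/

variable {n : ℕ}

noncomputable def S (α : Fin n → ℂ) (x : Fin n → ℤˣ) : ℂ :=
  ∑ i, α i * (((x i : ℤ) : ℝ) : ℂ)

noncomputable def f (α : Fin n → ℂ) (x : Fin n → ℤˣ) : ℝ :=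
  ‖S α x‖

noncomputable def c (α : Fin n → ℂ) (A : Finset (Fin n)) : ℝ :=
  ∑ x : Fin n → ℤˣ, f α x * chi A x

lemma f_nonneg (α : Fin n → ℂ) (x : Fin n → ℤˣ) : 0 ≤ f α x :=
  norm_nonneg _

/-- Fourier inversion -/
lemma inv_formula (α : Fin n → ℂ) (x : Fin n → ℤˣ) :
    ∑ A : Finset (Fin n), c α A * chi A x = 2 ^ n * f α x := by
  have step1 : ∀ A : Finset (Fin n), c α A * chi A x
      = ∑ y : Fin n → ℤˣ, f α y * chi A (y * x) := by
    intro A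
    rw [c, Finset.sum_mul]
    exact Finset.sum_congr rfl (fun y _ => by rw [chi_mul, mul_assoc])
  rw [Finset.sum_congr rfl (fun A _ => step1 A), Finset.sum_comm]
  have step2 : ∀ y : Fin n → ℤˣ, ∑ A : Finset (Fin n), f α y * chi A (y * x)
      = f α y * (if y * x = 1 then (2:ℝ) ^ n else 0) := by
    intro y
    rw [← Finset.mul_sum, sum_chi_over_sets]
  rw [Finset.sum_congr rfl (fun y _ => step2 y)]
  have hiff : ∀ y : Fin n → ℤˣ, (y * x = 1) ↔ (y = x) := by
    intro y
    constructor
    · intro h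
      have := congrArg (· * x) h
      simpa [mul_assoc, cube_mul_self x] using this
    · rintro rfl
      exact cube_mul_self _
  have : ∀ y : Fin n → ℤˣ, f α y * (if y * x = 1 then (2:ℝ) ^ n else 0)
      = if y = x then f α y * 2 ^ n else 0 := by
    intro y
    by_cases h : y = x
    · rw [if_pos ((hiff y).mpr h), if_pos h]
    · rw [if_neg (fun hc => h ((hiff y).mp hc)), if_neg h, mul_zero]
  rw [Finset.sum_congr rfl (fun y _ => this y), Finset.sum_ite_eq' Finset.univ x]
  rw [if_pos (Finset.mem_univ x)]
  ring

/-- Parseval -/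
lemma parseval (α : Fin n → ℂ) :
    ∑ A : Finset (Fin n), (c α A) ^ 2 = 2 ^ n * ∑ x : Fin n → ℤˣ, (f α x) ^ 2 := by
  have : ∀ A : Finset (Fin n), (c α A) ^ 2 = ∑ x : Fin n → ℤˣ, f α x * chi A x * c α A := by
    intro A
    rw [sq, c, Finset.sum_mul]
  rw [Finset.sum_congr rfl (fun A _ => this A), Finset.sum_comm]
  have step : ∀ x : Fin n → ℤˣ, ∑ A : Finset (Fin n), f α x * chi A x * c α A
      = f α x * (2 ^ n * f α x) := by
    intro x
    rw [← inv_formula α x, Finset.mul_sum]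
    exact Finset.sum_congr rfl (fun A _ => by ring)
  rw [Finset.sum_congr rfl (fun x _ => step x), Finset.mul_sum]
  exact Finset.sum_congr rfl (fun x _ => by ring)

/-- correlation identity -/
lemma corr_identity (α : Fin n → ℂ) (δ : Fin n → ℤˣ) :
    2 ^ n * ∑ x : Fin n → ℤˣ, f α x * f α (x * δ)
      = ∑ A : Finset (Fin n), (c α A) ^ 2 * chi A δ := by
  have step1 : ∀ x : Fin n → ℤˣ, 2 ^ n * (f α x * f α (x * δ))
      = ∑ A : Finset (Fin n), f α x * (c α A * (chi A x * chi A δ)) := by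
    intro x
    have := inv_formula α (x * δ)
    calc 2 ^ n * (f α x * f α (x * δ)) = f α x * (2 ^ n * f α (x * δ)) := by ring
    _ = f α x * ∑ A : Finset (Fin n), c α A * chi A (x * δ) := by rw [this]
    _ = _ := by
        rw [Finset.mul_sum]
        exact Finset.sum_congr rfl (fun A _ => by rw [chi_mul])
  rw [Finset.mul_sum, Finset.sum_congr rfl (fun x _ => step1 x), Finset.sum_comm]
  apply Finset.sum_congr rfl
  intro A _
  rw [sq]
  have : ∀ x : Fin n → ℤˣ, f α x * (c α A * (chi A x * chi A δ))
      = (f α x * chi A x) * (c α A * chi A δ) := fun x => by ring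
  rw [Finset.sum_congr rfl (fun x _ => this x), ← Finset.sum_mul, ← c]
  ring


/-! ### real and imaginary parts of `S` -/

lemma S_re (α : Fin n → ℂ) (x : Fin n → ℤˣ) :
    (S α x).re = ∑ i, (α i).re * uv (x i) := by
  rw [S, Complex.re_sum]
  exact Finset.sum_congr rfl (fun i _ => by
    rw [Complex.mul_re, Complex.ofReal_re, Complex.ofReal_im, mul_zero, sub_zero]; rfl)

lemma S_im (α : Fin n → ℂ) (x : Fin n → ℤˣ) :
    (S α x).im = ∑ i, (α i).im * uv (x i) := by
  rw [S, Complex.im_sum]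
  exact Finset.sum_congr rfl (fun i _ => by
    rw [Complex.mul_im, Complex.ofReal_re, Complex.ofReal_im, mul_zero, zero_add]; rfl)

/-- correlation of a linear form with its shift -/
lemma corr_lin (β : Fin n → ℝ) (δ : Fin n → ℤˣ) :
    ∑ x : Fin n → ℤˣ, (∑ i, β i * uv (x i)) * (∑ j, β j * uv ((x * δ) j))
      = 2 ^ n * ∑ i, β i ^ 2 * uv (δ i) := by
  have step1 : ∀ x : Fin n → ℤˣ, (∑ i, β i * uv (x i)) * (∑ j, β j * uv ((x * δ) j))
      = ∑ i, ∑ j, (β i * β j * uv (δ j)) * (uv (x i) * uv (x j)) := by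
    intro x
    rw [Finset.sum_mul_sum]
    refine Finset.sum_congr rfl (fun i _ => Finset.sum_congr rfl (fun j _ => ?_))
    have : uv ((x * δ) j) = uv (x j) * uv (δ j) := by
      rw [Pi.mul_apply, uv_mul]
    rw [this]
    ring
  rw [Finset.sum_congr rfl (fun x _ => step1 x), Finset.sum_comm]
  have step2 : ∀ i : Fin n, ∑ x : Fin n → ℤˣ, ∑ j, (β i * β j * uv (δ j)) * (uv (x i) * uv (x j))
      = ∑ j, (β i * β j * uv (δ j)) * ∑ x : Fin n → ℤˣ, uv (x i) * uv (x j) := by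
    intro i
    rw [Finset.sum_comm]
    exact Finset.sum_congr rfl (fun j _ => by rw [Finset.mul_sum])
  rw [Finset.sum_congr rfl (fun i _ => step2 i)]
  have step3 : ∀ i : Fin n, ∑ j, (β i * β j * uv (δ j)) * (∑ x : Fin n → ℤˣ, uv (x i) * uv (x j))
      = β i ^ 2 * uv (δ i) * 2 ^ n := by
    intro i
    have : ∀ j : Fin n, (β i * β j * uv (δ j)) * (∑ x : Fin n → ℤˣ, uv (x i) * uv (x j))
        = if i = j then (β i * β j * uv (δ j)) * 2 ^ n else 0 := by
      intro j
      rw [sum_uv_mul i j]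
      by_cases h : i = j
      · rw [if_pos h, if_pos h]
      · rw [if_neg h, if_neg h, mul_zero]
    rw [Finset.sum_congr rfl (fun j _ => this j), Finset.sum_ite_eq Finset.univ i,
      if_pos (Finset.mem_univ i)]
    ring
  rw [Finset.sum_congr rfl (fun i _ => step3 i), Finset.mul_sum]
  exact Finset.sum_congr rfl (fun i _ => by ring)

/-- pointwise Cauchy–Schwarz in the plane -/
lemma pointwise_lb (z w : ℂ) :
    z.re * w.re + z.im * w.im ≤ ‖z‖ * ‖w‖ := by
  have h1 : (z * starRingEnd ℂ w).re = z.re * w.re + z.im * w.im := by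
    rw [Complex.mul_re, Complex.conj_re, Complex.conj_im]
    ring
  have h2 : ‖z * starRingEnd ℂ w‖ = ‖z‖ * ‖w‖ := by
    rw [norm_mul, Complex.norm_conj]
  calc z.re * w.re + z.im * w.im = (z * starRingEnd ℂ w).re := h1.symm
  _ ≤ ‖z * starRingEnd ℂ w‖ := Complex.re_le_norm _
  _ = ‖z‖ * ‖w‖ := h2

lemma abs_sq_eq (α : Fin n → ℂ) (i : Fin n) :
    ‖α i‖ ^ 2 = (α i).re ^ 2 + (α i).im ^ 2 := by
  rw [Complex.sq_norm, Complex.normSq_apply]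
  ring

/-- lower bound for the shifted correlation -/
lemma corr_lower (α : Fin n → ℂ) (δ : Fin n → ℤˣ) :
    2 ^ n * ∑ i, ‖α i‖ ^ 2 * uv (δ i)
      ≤ ∑ x : Fin n → ℤˣ, f α x * f α (x * δ) := by
  have key : ∀ x : Fin n → ℤˣ,
      (S α x).re * (S α (x * δ)).re + (S α x).im * (S α (x * δ)).im ≤ f α x * f α (x * δ) :=
    fun x => pointwise_lb (S α x) (S α (x * δ))
  have expand : ∑ x : Fin n → ℤˣ,
      ((S α x).re * (S α (x * δ)).re + (S α x).im * (S α (x * δ)).im)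
      = 2 ^ n * ∑ i, ‖α i‖ ^ 2 * uv (δ i) := by
    rw [Finset.sum_add_distrib]
    have hre : ∑ x : Fin n → ℤˣ, (S α x).re * (S α (x * δ)).re
        = 2 ^ n * ∑ i, (α i).re ^ 2 * uv (δ i) := by
      rw [Finset.sum_congr rfl (fun x _ => by rw [S_re, S_re])]
      exact corr_lin (fun i => (α i).re) δ
    have him : ∑ x : Fin n → ℤˣ, (S α x).im * (S α (x * δ)).im
        = 2 ^ n * ∑ i, (α i).im ^ 2 * uv (δ i) := by
      rw [Finset.sum_congr rfl (fun x _ => by rw [S_im, S_im])]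
      exact corr_lin (fun i => (α i).im) δ
    rw [hre, him, ← mul_add]
    apply congrArg
    rw [← Finset.sum_add_distrib]
    exact Finset.sum_congr rfl (fun i _ => by rw [abs_sq_eq]; ring)
  rw [← expand]
  exact Finset.sum_le_sum (fun x _ => key x)

/-- the square sum of `f` -/
lemma sum_f_sq (α : Fin n → ℂ) :
    ∑ x : Fin n → ℤˣ, (f α x) ^ 2 = 2 ^ n * ∑ i, ‖α i‖ ^ 2 := by
  have h1 : ∀ x : Fin n → ℤˣ, (f α x) ^ 2 = (S α x).re * (S α x).re + (S α x).im * (S α x).im := by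
    intro x
    rw [f, Complex.sq_norm, Complex.normSq_apply]
  have h2 : ∀ x : Fin n → ℤˣ, x * (1 : Fin n → ℤˣ) = x := fun x => mul_one x
  have := corr_lin (fun i => (α i).re) (1 : Fin n → ℤˣ)
  have him := corr_lin (fun i => (α i).im) (1 : Fin n → ℤˣ)
  rw [Finset.sum_congr rfl (fun x _ => by rw [h2 x]) ] at this him
  have huv1 : ∀ i : Fin n, uv ((1 : Fin n → ℤˣ) i) = 1 := fun i => uv_one
  rw [Finset.sum_congr rfl (fun x _ => h1 x), Finset.sum_add_distrib]
  have hre' : ∑ x : Fin n → ℤˣ, (S α x).re * (S α x).re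
      = 2 ^ n * ∑ i, (α i).re ^ 2 := by
    rw [Finset.sum_congr rfl (fun x _ => by rw [S_re])]
    rw [this]
    apply congrArg
    exact Finset.sum_congr rfl (fun i _ => by rw [huv1 i, mul_one])
  have him' : ∑ x : Fin n → ℤˣ, (S α x).im * (S α x).im
      = 2 ^ n * ∑ i, (α i).im ^ 2 := by
    rw [Finset.sum_congr rfl (fun x _ => by rw [S_im])]
    rw [him]
    apply congrArg
    exact Finset.sum_congr rfl (fun i _ => by rw [huv1 i, mul_one])
  rw [hre', him', ← mul_add]
  apply congrArg
  rw [← Finset.sum_add_distrib]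
  exact Finset.sum_congr rfl (fun i _ => (abs_sq_eq α i).symm)

/-- level-one Walsh coefficients of the even function `f` vanish -/
lemma c_singleton (α : Fin n → ℂ) (i : Fin n) : c α ({i} : Finset (Fin n)) = 0 := by
  set m : Fin n → ℤˣ := (fun _ => (-1 : ℤˣ)) with hm
  have hSneg : ∀ x : Fin n → ℤˣ, S α (x * m) = - S α x := by
    intro x
    rw [S, S, ← Finset.sum_neg_distrib]
    refine Finset.sum_congr rfl (fun j _ => ?_)
    have : (((x * m) j : ℤ) : ℝ) = -(((x j : ℤ)) : ℝ) := by
      rw [Pi.mul_apply, hm]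
      push_cast [Units.val_mul]
      ring
    rw [this]
    push_cast
    ring
  have hfneg : ∀ x : Fin n → ℤˣ, f α (x * m) = f α x := by
    intro x
    rw [f, f, hSneg x, norm_neg]
  have hchi : ∀ x : Fin n → ℤˣ, chi ({i} : Finset (Fin n)) x = uv (x i) := fun x => by
    rw [chi, Finset.prod_singleton]
  have hneg : c α ({i} : Finset (Fin n)) = - c α ({i} : Finset (Fin n)) := by
    conv_lhs => rw [c, ← sum_cube_reindex m (fun x => f α x * chi ({i} : Finset (Fin n)) x)]
    rw [c, ← Finset.sum_neg_distrib]
    refine Finset.sum_congr rfl (fun x _ => ?_)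
    rw [hfneg x, hchi, hchi, Pi.mul_apply, uv_mul, hm, uv_neg_one]
    ring
  linarith


/-! ### noise weights -/

noncomputable def piw (ρ : ℝ) (δ : Fin n → ℤˣ) : ℝ :=
  ∏ i, (if δ i = 1 then (1+ρ)/2 else (1-ρ)/2)

lemma piw_nonneg {ρ : ℝ} (h0 : 0 ≤ ρ) (h1 : ρ ≤ 1) (δ : Fin n → ℤˣ) : 0 ≤ piw ρ δ := by
  refine Finset.prod_nonneg (fun i _ => ?_)
  by_cases h : δ i = 1
  · rw [if_pos h]; linarith
  · rw [if_neg h]; linarith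

lemma chi_as_univ_prod (A : Finset (Fin n)) (x : Fin n → ℤˣ) :
    chi A x = ∏ i, (if i ∈ A then uv (x i) else 1) := by
  rw [Finset.prod_ite_mem, Finset.univ_inter]
  rfl

lemma piw_chi (ρ : ℝ) (A : Finset (Fin n)) :
    ∑ δ : Fin n → ℤˣ, piw ρ δ * chi A δ = ρ ^ A.card := by
  have step1 : ∀ δ : Fin n → ℤˣ, piw ρ δ * chi A δ
      = ∏ i, ((if δ i = 1 then (1+ρ)/2 else (1-ρ)/2) * (if i ∈ A then uv (δ i) else 1)) := by
    intro δ
    rw [piw, chi_as_univ_prod, ← Finset.prod_mul_distrib]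
  rw [Finset.sum_congr rfl (fun δ _ => step1 δ)]
  rw [prodsum (fun i u => (if u = 1 then (1+ρ)/2 else (1-ρ)/2) * (if i ∈ A then uv u else 1))]
  have step2 : ∀ i : Fin n,
      (∑ u : ℤˣ, (if u = 1 then (1+ρ)/2 else (1-ρ)/2) * (if i ∈ A then uv u else 1))
      = if i ∈ A then ρ else 1 := by
    intro i
    rw [sum_zunits]
    have hm1 : ¬((-1:ℤˣ) = 1) := by decide
    by_cases h : i ∈ A
    · rw [if_pos rfl, if_neg hm1, if_pos h, if_pos h, if_pos h, uv_one, uv_neg_one]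
      ring
    · rw [if_pos rfl, if_neg hm1, if_neg h, if_neg h, if_neg h]
      ring
  rw [Finset.prod_congr rfl (fun i _ => step2 i), Finset.prod_ite_mem, Finset.univ_inter,
    Finset.prod_const]

/-! ### the key inequality -/

lemma key_ineq (α : Fin n → ℂ) {ρ : ℝ} (h0 : 0 ≤ ρ) (h1 : ρ < 1) :
    ρ * (2 ^ n * (2 ^ n * ∑ i, ‖α i‖ ^ 2)) ≤ (1 + ρ) * (c α ∅) ^ 2 := by
  set σ2 : ℝ := ∑ i, ‖α i‖ ^ 2 with hσ2
  set M : ℝ := 2 ^ n * (2 ^ n * σ2) with hM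
  set W : ℝ := (c α ∅) ^ 2 with hW
  set A : ℝ := ∑ B : Finset (Fin n), (c α B) ^ 2 * ρ ^ B.card with hA
  -- lower bound for A
  have lower : ρ * M ≤ A := by
    have e1 : A = ∑ δ : Fin n → ℤˣ, piw ρ δ * (2 ^ n * ∑ x : Fin n → ℤˣ, f α x * f α (x * δ)) := by
      rw [hA]
      have : ∀ B : Finset (Fin n), (c α B) ^ 2 * ρ ^ B.card
          = ∑ δ : Fin n → ℤˣ, piw ρ δ * ((c α B) ^ 2 * chi B δ) := by
        intro B
        rw [← piw_chi ρ B, Finset.mul_sum]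
        exact Finset.sum_congr rfl (fun δ _ => by ring)
      rw [Finset.sum_congr rfl (fun B _ => this B), Finset.sum_comm]
      refine Finset.sum_congr rfl (fun δ _ => ?_)
      rw [corr_identity α δ, Finset.mul_sum]
    have e2 : ∑ δ : Fin n → ℤˣ, piw ρ δ * (2 ^ n * (2 ^ n * ∑ i, ‖α i‖ ^ 2 * uv (δ i)))
        ≤ A := by
      rw [e1]
      refine Finset.sum_le_sum (fun δ _ => ?_)
      have hpw := piw_nonneg h0 (le_of_lt h1) δ
      have hcl := corr_lower α δ
      have h2n : (0:ℝ) ≤ 2 ^ n := by positivity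
      nlinarith [mul_le_mul_of_nonneg_left hcl (mul_nonneg hpw h2n)]
    refine le_trans (le_of_eq ?_) e2
    have e3 : ∀ δ : Fin n → ℤˣ, piw ρ δ * (2 ^ n * (2 ^ n * ∑ i, ‖α i‖ ^ 2 * uv (δ i)))
        = 2 ^ n * (2 ^ n * ∑ i, ‖α i‖ ^ 2 * (piw ρ δ * uv (δ i))) := by
      intro δ
      rw [Finset.mul_sum, Finset.mul_sum, Finset.mul_sum, Finset.mul_sum, Finset.mul_sum]
      exact Finset.sum_congr rfl (fun i _ => by ring)
    rw [Finset.sum_congr rfl (fun δ _ => e3 δ)]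
    rw [← Finset.mul_sum, ← Finset.mul_sum, Finset.sum_comm]
    have e4 : ∀ i : Fin n, ∑ δ : Fin n → ℤˣ, ‖α i‖ ^ 2 * (piw ρ δ * uv (δ i))
        = ‖α i‖ ^ 2 * ρ := by
      intro i
      rw [← Finset.mul_sum]
      have hpc := piw_chi ρ ({i} : Finset (Fin n))
      rw [Finset.card_singleton, pow_one] at hpc
      have hthis : ∑ δ : Fin n → ℤˣ, piw ρ δ * uv (δ i) = ρ := by
        conv_rhs => rw [← hpc]
        exact Finset.sum_congr rfl (fun δ _ => by rw [chi, Finset.prod_singleton])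
      rw [hthis]
    rw [Finset.sum_congr rfl (fun i _ => e4 i)]
    have : ∑ i : Fin n, ‖α i‖ ^ 2 * ρ = (∑ i : Fin n, ‖α i‖ ^ 2) * ρ :=
      (Finset.sum_mul _ _ _).symm
    rw [this, hM, hσ2]
    ring
  -- upper bound for A
  have upper : A ≤ W + ρ ^ 2 * (M - W) := by
    have hpars : ∑ B : Finset (Fin n), (c α B) ^ 2 = M := by
      rw [parseval, sum_f_sq, hM]
    have hsplit : ∑ B ∈ (Finset.univ : Finset (Finset (Fin n))).erase ∅, (c α B) ^ 2 = M - W := by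
      have h' := Finset.sum_erase_add (Finset.univ : Finset (Finset (Fin n)))
        (fun B => (c α B) ^ 2) (Finset.mem_univ ∅)
      beta_reduce at h'
      rw [hpars] at h'
      rw [hW]
      linarith
    have hsplitA : A = (c α ∅) ^ 2 * ρ ^ (∅ : Finset (Fin n)).card
        + ∑ B ∈ (Finset.univ : Finset (Finset (Fin n))).erase ∅, (c α B) ^ 2 * ρ ^ B.card := by
      rw [hA]
      have h' := Finset.sum_erase_add (Finset.univ : Finset (Finset (Fin n)))
        (fun B => (c α B) ^ 2 * ρ ^ B.card) (Finset.mem_univ ∅)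
      beta_reduce at h'
      linarith
    have hterm : ∀ B ∈ (Finset.univ : Finset (Finset (Fin n))).erase ∅,
        (c α B) ^ 2 * ρ ^ B.card ≤ ρ ^ 2 * (c α B) ^ 2 := by
      intro B hB
      have hBne : B ≠ ∅ := (Finset.mem_erase.mp hB).1
      rcases Nat.lt_or_ge B.card 2 with hc | hc
      · interval_cases h : B.card
        · exact absurd (Finset.card_eq_zero.mp h) hBne
        · obtain ⟨i, rfl⟩ := Finset.card_eq_one.mp h
          rw [c_singleton α i]
          norm_num
      · have : ρ ^ B.card ≤ ρ ^ 2 := pow_le_pow_of_le_one h0 (le_of_lt h1) hc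
        nlinarith [sq_nonneg (c α B)]
    calc A = (c α ∅) ^ 2 * ρ ^ (∅ : Finset (Fin n)).card
        + ∑ B ∈ (Finset.univ : Finset (Finset (Fin n))).erase ∅, (c α B) ^ 2 * ρ ^ B.card := hsplitA
    _ ≤ (c α ∅) ^ 2 * 1 + ∑ B ∈ (Finset.univ : Finset (Finset (Fin n))).erase ∅,
        ρ ^ 2 * (c α B) ^ 2 := by
        refine add_le_add (le_of_eq (by rw [Finset.card_empty, pow_zero])) ?_
        exact Finset.sum_le_sum hterm
    _ = W + ρ ^ 2 * (M - W) := by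
        rw [← Finset.mul_sum, hsplit, hW, mul_one]
  -- combine
  have hMW : ρ * M ≤ W + ρ ^ 2 * (M - W) := le_trans lower upper
  nlinarith [sq_nonneg (c α ∅), mul_nonneg (mul_nonneg h0 (sub_nonneg.mpr (le_of_lt h1))) (sq_nonneg (c α ∅))]


/-- letting `ρ → 1` in the key inequality -/
lemma lower_final (α : Fin n → ℂ) :
    2 ^ n * (2 ^ n * ∑ i, ‖α i‖ ^ 2) ≤ 2 * (c α ∅) ^ 2 := by
  set M : ℝ := 2 ^ n * (2 ^ n * ∑ i, ‖α i‖ ^ 2) with hM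
  set W : ℝ := (c α ∅) ^ 2 with hW
  have hW0 : 0 ≤ W := sq_nonneg _
  by_contra hcon
  push_neg at hcon
  have hM2 : 2 * W < M := hcon
  have hMpos : 0 < M := by linarith
  have hMne : M ≠ 0 := ne_of_gt hMpos
  have hhalf : W / M < 1 / 2 := by
    rw [div_lt_iff₀ hMpos]
    linarith
  have h0 : 0 ≤ W / M + 1 / 2 := by
    have := div_nonneg hW0 (le_of_lt hMpos)
    linarith
  have h1 : W / M + 1 / 2 < 1 := by linarith
  have key := key_ineq α h0 h1
  rw [← hM] at key
  have lhs_eq : (W / M + 1 / 2) * M = W + M / 2 := by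
    rw [add_mul, div_mul_cancel₀ W hMne]
    ring
  have rhs_eq : (1 + (W / M + 1 / 2)) * W = W + W / 2 + (W / M) * W := by ring
  have hterm : (W / M) * W ≤ (1 / 2) * W :=
    mul_le_mul_of_nonneg_right (le_of_lt hhalf) hW0
  rw [lhs_eq, rhs_eq] at key
  linarith

end KhintchineAux

open KhintchineAux in
/-- Khintchine inequality for `p = 1`: for all complex numbers `α_1, …, α_n`,
`(1/√2) (∑ |α_i|²)^{1/2} ≤ 2^{-n} ∑_{w ∈ {−1,1}ⁿ} |∑ α_i w_i| ≤ (∑ |α_i|²)^{1/2}`. -/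
theorem khintchine_one (n : ℕ) (α : Fin n → ℂ) :
    (1 / Real.sqrt 2) * Real.sqrt (∑ i, ‖α i‖ ^ 2) ≤
      (1 / 2 ^ n) * ∑ w : Fin n → ℤˣ,
        ‖∑ i, α i * (((w i : ℤ) : ℝ) : ℂ)‖ ∧
    (1 / 2 ^ n) * (∑ w : Fin n → ℤˣ,
        ‖∑ i, α i * (((w i : ℤ) : ℝ) : ℂ)‖) ≤
      Real.sqrt (∑ i, ‖α i‖ ^ 2) := by
  have hσeq : ∑ i, ‖α i‖ ^ 2 = ∑ i, ‖α i‖ ^ 2 :=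
    Finset.sum_congr rfl (fun i _ => rfl)
  set σ2 : ℝ := ∑ i, ‖α i‖ ^ 2 with hσ2
  have hσ0 : 0 ≤ σ2 := Finset.sum_nonneg (fun i _ => sq_nonneg _)
  have hceq : c α ∅ = ∑ x : Fin n → ℤˣ, f α x := by
    rw [c]
    exact Finset.sum_congr rfl (fun x _ => by rw [chi_empty, mul_one])
  have hfsum : ∑ w : Fin n → ℤˣ, ‖∑ i, α i * (((w i : ℤ) : ℝ) : ℂ)‖ = c α ∅ := by
    rw [hceq]
    rfl
  have hc0 : 0 ≤ c α ∅ := by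
    rw [hceq]
    exact Finset.sum_nonneg (fun x _ => f_nonneg α x)
  have h2n : (0:ℝ) < 2 ^ n := by positivity
  rw [hσeq, hfsum]
  constructor
  · -- lower bound
    have hkey := lower_final α
    rw [← hσ2] at hkey
    have hLnn : 0 ≤ (1 / Real.sqrt 2) * Real.sqrt σ2 := by positivity
    have hRnn : 0 ≤ (1 / (2:ℝ) ^ n) * c α ∅ := by positivity
    have hL : ((1 / Real.sqrt 2) * Real.sqrt σ2) ^ 2 = σ2 / 2 := by
      rw [mul_pow, div_pow, one_pow, Real.sq_sqrt (by norm_num : (0:ℝ) ≤ 2), Real.sq_sqrt hσ0]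
      ring
    have hR : ((1 / (2:ℝ) ^ n) * c α ∅) ^ 2 = (c α ∅) ^ 2 / (2 ^ n * 2 ^ n) := by
      rw [mul_pow, div_pow, one_pow]
      ring
    have hsq : ((1 / Real.sqrt 2) * Real.sqrt σ2) ^ 2 ≤ ((1 / (2:ℝ) ^ n) * c α ∅) ^ 2 := by
      rw [hL, hR, div_le_div_iff₀ (by norm_num) (by positivity)]
      nlinarith
    calc (1 / Real.sqrt 2) * Real.sqrt σ2
        = Real.sqrt (((1 / Real.sqrt 2) * Real.sqrt σ2) ^ 2) := (Real.sqrt_sq hLnn).symm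
    _ ≤ Real.sqrt (((1 / (2:ℝ) ^ n) * c α ∅) ^ 2) := Real.sqrt_le_sqrt hsq
    _ = (1 / (2:ℝ) ^ n) * c α ∅ := Real.sqrt_sq hRnn
  · -- upper bound
    have hCS := Finset.sum_mul_sq_le_sq_mul_sq Finset.univ (fun _ : Fin n → ℤˣ => (1:ℝ)) (f α)
    have e1 : ∑ x : Fin n → ℤˣ, (1:ℝ) * f α x = c α ∅ := by
      rw [hceq]
      exact Finset.sum_congr rfl (fun x _ => one_mul _)
    have e2 : ∑ x : Fin n → ℤˣ, ((1:ℝ)) ^ 2 = 2 ^ n := by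
      rw [Finset.sum_const, Finset.card_univ, nsmul_eq_mul, one_pow, mul_one]
      exact card_cube n
    rw [e1, e2, sum_f_sq α, ← hσ2] at hCS
    have hRnn : 0 ≤ (1 / (2:ℝ) ^ n) * c α ∅ := by positivity
    have hsq : ((1 / (2:ℝ) ^ n) * c α ∅) ^ 2 ≤ σ2 := by
      rw [mul_pow, div_pow, one_pow]
      rw [div_mul_eq_mul_div, div_le_iff₀ (by positivity), one_mul]
      calc (c α ∅) ^ 2 ≤ 2 ^ n * (2 ^ n * σ2) := hCS
      _ = σ2 * ((2:ℝ) ^ n) ^ 2 := by ring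
    calc (1 / (2:ℝ) ^ n) * c α ∅
        = Real.sqrt (((1 / (2:ℝ) ^ n) * c α ∅) ^ 2) := (Real.sqrt_sq hRnn).symm
    _ ≤ Real.sqrt σ2 := Real.sqrt_le_sqrt hsq
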